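/- Let X be a proper metric space in which every pair of points is joined by a minimizing geodesic: for all x, y ∈ X there exists γ : ℝ → X with γ 0 = x, γ (dist x y) = y, and dist (γ s) (γ t) = |s − t| for all s, t ∈ [0, dist x y]. Let C ⊆ X be a nonempty compact set and let (x_n) and (y_n) be sequences in X with infDist x_n C → ∞ and infDist y_n C → ∞, such that for every n there exists z_n ∈ C with dist x_n z_n + dist z_n y_n = dist x_n y_n. Then X contains a distance-minimizing geodesic: there exists α : ℝ → X with dist (α s) (α t) = |s − t| for all s, t ∈ ℝ. -/

import Mathlib

open Metric Filter Topology

/-- In a proper geodesic metric space, if there are sequences (x_n), (y_n) going to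
infinity away from a fixed nonempty compact set C such that some minimizing geodesic
from x_n to y_n passes through C, then the space contains a distance-minimizing
geodesic line. -/
theorem exists_distMinGeodesic_of_spanning_sequences {X : Type*} [MetricSpace X]
    [ProperSpace X]
    (hgeo : ∀ x y : X, ∃ γ : ℝ → X, γ 0 = x ∧ γ (dist x y) = y ∧
      ∀ s ∈ Set.Icc (0 : ℝ) (dist x y), ∀ t ∈ Set.Icc (0 : ℝ) (dist x y),
        dist (γ s) (γ t) = |s - t|)
    (C : Set X) (hCne : C.Nonempty) (hCc : IsCompact C)
    (x y : ℕ → X)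
    (hx : Filter.Tendsto (fun n => Metric.infDist (x n) C) Filter.atTop Filter.atTop)
    (hy : Filter.Tendsto (fun n => Metric.infDist (y n) C) Filter.atTop Filter.atTop)
    (hz : ∀ n, ∃ z ∈ C, dist (x n) z + dist z (y n) = dist (x n) (y n)) :
    ∃ α : ℝ → X, ∀ s t : ℝ, dist (α s) (α t) = |s - t| := by
  classical
  choose z hzC hzsum using hz
  choose γ1 hγ10 hγ1e hγ1d using fun n => hgeo (x n) (z n)
  choose γ2 hγ20 hγ2e hγ2d using fun n => hgeo (z n) (y n)
  set a : ℕ → ℝ := fun n => dist (x n) (z n) with ha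
  set b : ℕ → ℝ := fun n => dist (z n) (y n) with hb
  have ha0 : ∀ n, 0 ≤ a n := fun n => dist_nonneg
  have hb0 : ∀ n, 0 ≤ b n := fun n => dist_nonneg
  -- distance facts along the two geodesic pieces
  have d1x : ∀ n, ∀ u ∈ Set.Icc (0 : ℝ) (a n), dist (x n) (γ1 n u) = u := by
    intro n u hu
    have h := hγ1d n 0 ⟨le_refl 0, ha0 n⟩ u hu
    rw [hγ10 n] at h
    rw [h, abs_sub_comm, sub_zero, abs_of_nonneg hu.1]
  have d1z : ∀ n, ∀ u ∈ Set.Icc (0 : ℝ) (a n), dist (γ1 n u) (z n) = a n - u := by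
    intro n u hu
    have h := hγ1d n u hu (a n) ⟨ha0 n, le_refl _⟩
    rw [hγ1e n] at h
    rw [h, abs_of_nonpos (by linarith [hu.2])]
    ring
  have d2z : ∀ n, ∀ u ∈ Set.Icc (0 : ℝ) (b n), dist (z n) (γ2 n u) = u := by
    intro n u hu
    have h := hγ2d n 0 ⟨le_refl 0, hb0 n⟩ u hu
    rw [hγ20 n] at h
    rw [h, abs_sub_comm, sub_zero, abs_of_nonneg hu.1]
  have d2y : ∀ n, ∀ u ∈ Set.Icc (0 : ℝ) (b n), dist (γ2 n u) (y n) = b n - u := by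
    intro n u hu
    have h := hγ2d n u hu (b n) ⟨hb0 n, le_refl _⟩
    rw [hγ2e n] at h
    rw [h, abs_of_nonpos (by linarith [hu.2])]
    ring
  -- the concatenated geodesic, centered so that β n 0 = z n
  set β : ℕ → ℝ → X := fun n t => if t ≤ 0 then γ1 n (a n + t) else γ2 n t with hβ
  -- mixed-case distance computation
  have mixed : ∀ n, ∀ s, -(a n) ≤ s → s ≤ 0 → ∀ t, 0 < t → t ≤ b n →
      dist (γ1 n (a n + s)) (γ2 n t) = t - s := by
    intro n s hs1 hs2 t ht1 ht2
    have hmem1 : a n + s ∈ Set.Icc (0 : ℝ) (a n) := ⟨by linarith, by linarith⟩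
    have hmem2 : t ∈ Set.Icc (0 : ℝ) (b n) := ⟨le_of_lt ht1, ht2⟩
    have hd1 := d1x n _ hmem1
    have hd2 := d1z n _ hmem1
    have hd3 := d2z n _ hmem2
    have hd4 := d2y n _ hmem2
    have hupper : dist (γ1 n (a n + s)) (γ2 n t) ≤ t - s := by
      calc dist (γ1 n (a n + s)) (γ2 n t)
          ≤ dist (γ1 n (a n + s)) (z n) + dist (z n) (γ2 n t) := dist_triangle _ _ _
        _ = t - s := by rw [hd2, hd3]; ring
    have hlower : t - s ≤ dist (γ1 n (a n + s)) (γ2 n t) := by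
      have htri := dist_triangle4 (x n) (γ1 n (a n + s)) (γ2 n t) (y n)
      have hsum : a n + b n = dist (x n) (y n) := hzsum n
      rw [hd1, hd4] at htri
      linarith
    linarith
  -- β is isometric on [-(a n), b n]
  have key : ∀ n, ∀ s ∈ Set.Icc (-(a n)) (b n), ∀ t ∈ Set.Icc (-(a n)) (b n),
      dist (β n s) (β n t) = |s - t| := by
    intro n s hs t ht
    rcases le_or_gt s 0 with hs0 | hs0 <;> rcases le_or_gt t 0 with ht0 | ht0
    · simp only [hβ, if_pos hs0, if_pos ht0]
      have h := hγ1d n (a n + s) ⟨by linarith [hs.1], by linarith⟩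
        (a n + t) ⟨by linarith [ht.1], by linarith⟩
      rw [h, show a n + s - (a n + t) = s - t by ring]
    · simp only [hβ, if_pos hs0, if_neg (not_le.mpr ht0)]
      rw [mixed n s hs.1 hs0 t ht0 ht.2, abs_of_nonpos (by linarith)]
      ring
    · simp only [hβ, if_neg (not_le.mpr hs0), if_pos ht0]
      rw [dist_comm, mixed n t ht.1 ht0 s hs0 hs.2, abs_of_nonneg (by linarith)]
    · simp only [hβ, if_neg (not_le.mpr hs0), if_neg (not_le.mpr ht0)]
      exact hγ2d n s ⟨le_of_lt hs0, hs.2⟩ t ⟨le_of_lt ht0, ht.2⟩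
  -- clamp parameters into [-(a n), b n]
  set proj : ℕ → ℝ → ℝ := fun n t => max (-(a n)) (min t (b n)) with hproj
  have hproj_mem : ∀ n t, proj n t ∈ Set.Icc (-(a n)) (b n) := by
    intro n t
    exact ⟨le_max_left _ _, max_le (by linarith [ha0 n, hb0 n]) (min_le_right _ _)⟩
  have hproj_abs : ∀ n t, |proj n t| ≤ |t| := by
    intro n t
    have h1 : -|t| ≤ min t (b n) :=
      le_min (neg_abs_le t) (le_trans (neg_nonpos_of_nonneg (abs_nonneg t)) (hb0 n))
    have h2 : min t (b n) ≤ |t| := le_trans (min_le_left _ _) (le_abs_self t)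
    rw [abs_le]
    constructor
    · exact le_trans h1 (le_max_right _ _)
    · exact max_le (le_trans (neg_nonpos_of_nonneg (ha0 n)) (abs_nonneg t)) h2
  have hproj0 : ∀ n, proj n 0 = 0 := by
    intro n
    simp only [hproj]
    rw [min_eq_left (hb0 n), max_eq_right (neg_nonpos_of_nonneg (ha0 n))]
  set B : ℕ → ℝ → X := fun n t => β n (proj n t) with hB
  have distB : ∀ n s t, dist (B n s) (B n t) = |proj n s - proj n t| := by
    intro n s t
    exact key n _ (hproj_mem n s) _ (hproj_mem n t)
  -- B n t stays near C
  have hmemB : ∀ n t, B n t ∈ Metric.cthickening |t| C := by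
    intro n t
    have hd : dist (B n t) (z n) ≤ |t| := by
      have := distB n t 0
      rw [hproj0 n] at this
      have h0 : B n 0 = z n := by
        simp only [hB, hproj0 n, hβ, if_pos (le_refl (0:ℝ)), add_zero, hγ1e n]
        exact hγ1e n
      rw [h0] at this
      rw [this, sub_zero]
      exact hproj_abs n t
    exact Metric.mem_cthickening_of_dist_le (B n t) (z n) |t| C (hzC n) hd
  -- eventually proj n t = t
  have hev : ∀ t : ℝ, ∀ᶠ n in atTop, proj n t = t := by
    intro t
    have hxev : ∀ᶠ n in atTop, |t| ≤ Metric.infDist (x n) C := hx.eventually_ge_atTop _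
    have hyev : ∀ᶠ n in atTop, |t| ≤ Metric.infDist (y n) C := hy.eventually_ge_atTop _
    filter_upwards [hxev, hyev] with n hxn hyn
    have hat : |t| ≤ a n := le_trans hxn (Metric.infDist_le_dist_of_mem (hzC n))
    have hbt : |t| ≤ b n := by
      refine le_trans hyn ?_
      have := Metric.infDist_le_dist_of_mem (x := y n) (hzC n)
      rw [dist_comm] at this
      exact this
    have h1 : t ≤ b n := le_trans (le_abs_self t) hbt
    have h2 : -(a n) ≤ t := by
      have := neg_abs_le t
      linarith
    simp only [hproj]
    rw [min_eq_left h1, max_eq_right h2]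
  -- ultrafilter limit
  let U : Ultrafilter ℕ := Ultrafilter.of atTop
  have hU : (U : Filter ℕ) ≤ atTop := Ultrafilter.of_le atTop
  have hαex : ∀ t : ℝ, ∃ p : X, Tendsto (fun n => B n t) (U : Filter ℕ) (𝓝 p) := by
    intro t
    have hK : IsCompact (Metric.cthickening |t| C) := hCc.cthickening
    have hle : (U.map fun n => B n t : Filter X) ≤ 𝓟 (Metric.cthickening |t| C) := by
      rw [le_principal_iff]
      exact Filter.mem_map.2 (Filter.univ_mem' fun n => hmemB n t)
    obtain ⟨p, _, hp⟩ := hK.ultrafilter_le_nhds (U.map fun n => B n t) hle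
    exact ⟨p, hp⟩
  choose α hα using hαex
  refine ⟨α, fun s t => ?_⟩
  have h1 : Tendsto (fun n => dist (B n s) (B n t)) (U : Filter ℕ)
      (𝓝 (dist (α s) (α t))) := (hα s).dist (hα t)
  have h2 : ∀ᶠ n in (U : Filter ℕ), dist (B n s) (B n t) = |s - t| := by
    filter_upwards [(hev s).filter_mono hU, (hev t).filter_mono hU] with n hns hnt
    rw [distB, hns, hnt]
  have h3 : Tendsto (fun n => dist (B n s) (B n t)) (U : Filter ℕ) (𝓝 |s - t|) :=
    Tendsto.congr' (by filter_upwards [h2] with n hn; exact hn.symm) tendsto_const_nhds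
  exact tendsto_nhds_unique h1 h3
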